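/- For ε > 0 and t < ε_g ≤ t + ε, sup_{t' ∈ [0,ε]} { q_{ε,t'}·[1 − e^{ε_g − ε − t − t'}]_+ + (1 − q_{ε,t'})·[1 − e^{ε_g − t − t'}]_+ } = max{ q_{ε,(ε_g−t)/2}²·(1 − e^{−ε}), 1 − e^{ε_g − ε − t} } = q_{ε,(ε_g−t)/2}²·(1 − e^{−ε}). -/

import Mathlib

open Real

noncomputable def qT (ε t : ℝ) : ℝ := (1 - exp (t - ε)) / (1 - exp (-ε))

private lemma key_ineq (p q : ℝ) :
    (1 - exp p) * (1 - exp q) ≤ (1 - exp ((p + q) / 2)) ^ 2 := by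
  have hp : exp p = exp (p/2) * exp (p/2) := by rw [← exp_add]; congr 1; ring
  have hq : exp q = exp (q/2) * exp (q/2) := by rw [← exp_add]; congr 1; ring
  have hpq : exp ((p+q)/2) = exp (p/2) * exp (q/2) := by rw [← exp_add]; congr 1; ring
  nlinarith [sq_nonneg (exp (p/2) - exp (q/2))]

theorem stmt_16 (ε εg t : ℝ) (hε : 0 < ε) (ht : t < εg) (htε : εg ≤ t + ε)
    (hmid : (εg - t) / 2 ∈ Set.Icc 0 ε) :
    sSup ((fun t' : ℝ =>
        qT ε t' * max (1 - exp (εg - ε - t - t')) 0 +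
          (1 - qT ε t') * max (1 - exp (εg - t - t')) 0) '' Set.Icc 0 ε)
      = max (qT ε ((εg - t) / 2) ^ 2 * (1 - exp (-ε))) (1 - exp (εg - ε - t)) ∧
    max (qT ε ((εg - t) / 2) ^ 2 * (1 - exp (-ε))) (1 - exp (εg - ε - t))
      = qT ε ((εg - t) / 2) ^ 2 * (1 - exp (-ε)) := by
  have hD : 0 < 1 - exp (-ε) := by
    have h : exp (-ε) < exp 0 := exp_lt_exp.mpr (by linarith)
    rw [exp_zero] at h; linarith
  have hqmul : ∀ s : ℝ, qT ε s * (1 - exp (-ε)) = 1 - exp (s - ε) := by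
    intro s; unfold qT; field_simp
  set M := qT ε ((εg - t) / 2) ^ 2 * (1 - exp (-ε)) with hM
  have hMD : M * (1 - exp (-ε)) = (1 - exp ((εg - t)/2 - ε)) ^ 2 := by
    rw [hM, ← hqmul ((εg - t)/2)]; ring
  have hkey2 : (1 - exp (-ε)) * (1 - exp (εg - t - ε)) ≤ (1 - exp ((εg - t)/2 - ε)) ^ 2 := by
    have h := key_ineq (-ε) (εg - t - ε)
    rw [show (-ε + (εg - t - ε)) / 2 = (εg - t)/2 - ε by ring] at h
    exact h
  have hle : 1 - exp (εg - ε - t) ≤ M := by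
    rw [← mul_le_mul_iff_of_pos_right hD, hMD, show εg - ε - t = εg - t - ε by ring, mul_comm]
    exact hkey2
  have hmax : max M (1 - exp (εg - ε - t)) = M := max_eq_left hle
  have hub : ∀ t' ∈ Set.Icc (0:ℝ) ε,
      qT ε t' * max (1 - exp (εg - ε - t - t')) 0 +
        (1 - qT ε t') * max (1 - exp (εg - t - t')) 0 ≤ M := by
    intro t' ht'
    obtain ⟨h0, h1⟩ := ht'
    have hm1 : max (1 - exp (εg - ε - t - t')) 0 = 1 - exp (εg - ε - t - t') := by
      apply max_eq_left
      have h : exp (εg - ε - t - t') ≤ exp 0 := exp_le_exp.mpr (by linarith)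
      rw [exp_zero] at h; linarith
    rw [hm1]
    rcases le_or_gt (εg - t) t' with hcase | hcase
    · have hm2 : max (1 - exp (εg - t - t')) 0 = 1 - exp (εg - t - t') := by
        apply max_eq_left
        have h : exp (εg - t - t') ≤ exp 0 := exp_le_exp.mpr (by linarith)
        rw [exp_zero] at h; linarith
      rw [hm2, ← mul_le_mul_iff_of_pos_right hD, hMD]
      have e1 : exp (t' - ε) * exp (εg - ε - t - t') = exp (εg - t - 2*ε) := by
        rw [← exp_add]; congr 1; ring
      have e2 : exp (t' - ε) * exp (εg - t - t') = exp (εg - t - ε) := by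
        rw [← exp_add]; congr 1; ring
      have e3 : exp (-ε) * exp (εg - t - t') = exp (εg - ε - t - t') := by
        rw [← exp_add]; congr 1; ring
      have e4 : exp (-ε) * exp (εg - t - ε) = exp (εg - t - 2*ε) := by
        rw [← exp_add]; congr 1; ring
      have hq' := hqmul t'
      have expand : (qT ε t' * (1 - exp (-ε))) * (1 - exp (εg - ε - t - t')) +
          ((1 - exp (-ε)) - qT ε t' * (1 - exp (-ε))) * (1 - exp (εg - t - t'))
          = (1 - exp (-ε)) * (1 - exp (εg - t - ε)) := by
        rw [hq']
        linear_combination e1 - e2 + e3 - e4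
      have hlhs : (qT ε t' * (1 - exp (εg - ε - t - t')) +
          (1 - qT ε t') * (1 - exp (εg - t - t'))) * (1 - exp (-ε))
          = (1 - exp (-ε)) * (1 - exp (εg - t - ε)) := by
        linear_combination expand
      rw [hlhs]
      exact hkey2
    · have hm2 : max (1 - exp (εg - t - t')) 0 = 0 := by
        apply max_eq_right
        have h : exp 0 ≤ exp (εg - t - t') := exp_le_exp.mpr (by linarith)
        rw [exp_zero] at h; linarith
      rw [hm2, mul_zero, add_zero, ← mul_le_mul_iff_of_pos_right hD, hMD]
      have h := key_ineq (t' - ε) (εg - ε - t - t')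
      rw [show ((t' - ε) + (εg - ε - t - t')) / 2 = (εg - t)/2 - ε by ring] at h
      calc qT ε t' * (1 - exp (εg - ε - t - t')) * (1 - exp (-ε))
          = (qT ε t' * (1 - exp (-ε))) * (1 - exp (εg - ε - t - t')) := by ring
        _ = (1 - exp (t' - ε)) * (1 - exp (εg - ε - t - t')) := by rw [hqmul]
        _ ≤ _ := h
  have hmem : qT ε ((εg-t)/2) * max (1 - exp (εg - ε - t - (εg-t)/2)) 0 +
      (1 - qT ε ((εg-t)/2)) * max (1 - exp (εg - t - (εg-t)/2)) 0 = M := by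
    have h1 : max (1 - exp (εg - ε - t - (εg-t)/2)) 0 = 1 - exp ((εg-t)/2 - ε) := by
      rw [show εg - ε - t - (εg-t)/2 = (εg-t)/2 - ε by ring]
      apply max_eq_left
      have h : exp ((εg-t)/2 - ε) ≤ exp 0 := exp_le_exp.mpr (by linarith [hmid.2])
      rw [exp_zero] at h; linarith
    have h2 : max (1 - exp (εg - t - (εg-t)/2)) 0 = 0 := by
      apply max_eq_right
      have h : exp 0 ≤ exp (εg - t - (εg-t)/2) := exp_le_exp.mpr (by linarith)
      rw [exp_zero] at h; linarith
    rw [h1, h2, mul_zero, add_zero, ← hqmul ((εg-t)/2), hM]; ring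
  have hgreat : IsGreatest ((fun t' : ℝ =>
      qT ε t' * max (1 - exp (εg - ε - t - t')) 0 +
        (1 - qT ε t') * max (1 - exp (εg - t - t')) 0) '' Set.Icc 0 ε) M := by
    constructor
    · exact ⟨(εg-t)/2, hmid, hmem⟩
    · rintro y ⟨t', ht', rfl⟩
      exact hub t' ht'
  exact ⟨by rw [hgreat.csSup_eq, hmax], hmax⟩
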